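/- Let M̃ : [0,T] → ℝ be differentiable and satisfy M̃'(s) = -(q₁(s) - q₂(s)·M̃(s))·M̃(s) with terminal condition M̃(T) = g > 0, where q₁, q₂ : [0,T] → ℝ are continuous with q₁(s) > 0 and q₂(s) > 0 for all s. Then for all s ∈ [0,T], L₁ ≤ M̃(s) ≤ L₂, where L₁ = min(inf_{t∈[0,T]} q₁(t)/q₂(t), g) and L₂ = max(sup_{t∈[0,T]} q₁(t)/q₂(t), g). -/

import Mathlib

theorem stmt_4 (T g : ℝ) (hT : 0 < T) (q₁ q₂ M : ℝ → ℝ)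
    (hq₁ : ContinuousOn q₁ (Set.Icc 0 T)) (hq₂ : ContinuousOn q₂ (Set.Icc 0 T))
    (hq₁pos : ∀ s ∈ Set.Icc 0 T, 0 < q₁ s)
    (hq₂pos : ∀ s ∈ Set.Icc 0 T, 0 < q₂ s)
    (hODE : ∀ s ∈ Set.Icc 0 T, HasDerivAt M (-((q₁ s - q₂ s * M s) * M s)) s)
    (hterm : M T = g) (hg : 0 < g) :
    ∀ s ∈ Set.Icc 0 T,
      min (sInf ((fun t => q₁ t / q₂ t) '' Set.Icc 0 T)) g ≤ M s ∧
      M s ≤ max (sSup ((fun t => q₁ t / q₂ t) '' Set.Icc 0 T)) g := by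
  set φ : ℝ → ℝ := fun t => q₁ t / q₂ t with hφdef
  have hIcc : IsCompact (Set.Icc (0:ℝ) T) := isCompact_Icc
  have hφc : ContinuousOn φ (Set.Icc 0 T) :=
    hq₁.div hq₂ (fun t ht => (hq₂pos t ht).ne')
  set L₁ := min (sInf (φ '' Set.Icc 0 T)) g with hL₁def
  set L₂ := max (sSup (φ '' Set.Icc 0 T)) g with hL₂def
  have hbddA : BddAbove (φ '' Set.Icc 0 T) := hIcc.bddAbove_image hφc
  have hbddB : BddBelow (φ '' Set.Icc 0 T) := hIcc.bddBelow_image hφc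
  have hle₂ : ∀ t ∈ Set.Icc 0 T, φ t ≤ L₂ := fun t ht =>
    le_trans (le_csSup hbddA ⟨t, ht, rfl⟩) (le_max_left _ _)
  have hle₁ : ∀ t ∈ Set.Icc 0 T, L₁ ≤ φ t := fun t ht =>
    le_trans (min_le_left _ _) (csInf_le hbddB ⟨t, ht, rfl⟩)
  have hgL₂ : g ≤ L₂ := le_max_right _ _
  have hL₁g : L₁ ≤ g := min_le_right _ _
  have hMc : ContinuousOn M (Set.Icc 0 T) := fun s hs =>
    (hODE s hs).continuousAt.continuousWithinAt
  obtain ⟨K, hK⟩ := hIcc.exists_bound_of_continuousOn (hq₁.sub (hq₂.mul hMc))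
  -- M never vanishes on [0, T]
  have hMne : ∀ s ∈ Set.Icc 0 T, M s ≠ 0 := by
    intro s hs hM0
    have hsub : Set.Icc s T ⊆ Set.Icc 0 T := Set.Icc_subset_Icc hs.1 le_rfl
    have hgr := norm_le_gronwallBound_of_norm_deriv_right_le
      (f := M) (f' := fun x => -((q₁ x - q₂ x * M x) * M x))
      (δ := 0) (K := K) (ε := 0) (a := s) (b := T)
      (hMc.mono hsub)
      (fun x hx => (hODE x (hsub (Set.Ico_subset_Icc_self hx))).hasDerivWithinAt)
      (by simp [hM0])
      (fun x hx => by
        have hx' := hsub (Set.Ico_subset_Icc_self hx)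
        have h1 := hK x hx'
        simp only [norm_neg, norm_mul, Real.norm_eq_abs, Pi.sub_apply, Pi.mul_apply] at h1 ⊢
        have := mul_le_mul_of_nonneg_right h1 (abs_nonneg (M x))
        linarith)
      T ⟨hs.2, le_rfl⟩
    rw [gronwallBound_ε0_δ0] at hgr
    rw [hterm, Real.norm_eq_abs, abs_of_pos hg] at hgr
    linarith
  have hMpos : ∀ s ∈ Set.Icc 0 T, 0 < M s := by
    intro s hs
    rcases (hMne s hs).lt_or_gt with h | h
    · exfalso
      have hsub : Set.Icc s T ⊆ Set.Icc 0 T := Set.Icc_subset_Icc hs.1 le_rfl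
      have h0 : (0:ℝ) ∈ Set.Icc (M s) (M T) := ⟨h.le, by rw [hterm]; exact hg.le⟩
      obtain ⟨c, hc, hc0⟩ := intermediate_value_Icc hs.2 (hMc.mono hsub) h0
      exact hMne c (hsub hc) hc0
    · exact h
  have hL₂pos : 0 < L₂ := lt_of_lt_of_le hg hgL₂
  -- upper bound
  have hupper : ∀ s ∈ Set.Icc 0 T, M s ≤ L₂ := by
    intro s hs
    by_contra hcon
    push_neg at hcon
    have hsub : Set.Icc s T ⊆ Set.Icc 0 T := Set.Icc_subset_Icc hs.1 le_rfl
    set S := Set.Icc s T ∩ M ⁻¹' Set.Iic L₂ with hS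
    have hSclosed : IsClosed S :=
      (hMc.mono hsub).preimage_isClosed_of_isClosed isClosed_Icc isClosed_Iic
    have hTS : T ∈ S := ⟨⟨hs.2, le_rfl⟩, by simp [Set.mem_preimage, hterm, hgL₂]⟩
    have hSbdd : BddBelow S := ⟨s, fun x hx => hx.1.1⟩
    have htS : sInf S ∈ S := hSclosed.csInf_mem ⟨T, hTS⟩ hSbdd
    set t := sInf S with ht
    have hst : s < t := by
      rcases lt_or_eq_of_le htS.1.1 with h | h
      · exact h
      · exfalso; have : M t ≤ L₂ := htS.2; rw [← h] at this; linarith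
    have hmem : Set.Icc s t ⊆ Set.Icc 0 T := Set.Icc_subset_Icc hs.1 htS.1.2
    have hgt : ∀ x ∈ Set.Ico s t, L₂ < M x := by
      intro x hx
      by_contra hle
      push_neg at hle
      exact absurd (csInf_le hSbdd ⟨⟨hx.1, le_trans hx.2.le htS.1.2⟩, hle⟩)
        (not_le.mpr hx.2)
    have hmono : StrictMonoOn M (Set.Icc s t) := by
      apply strictMonoOn_of_deriv_pos (convex_Icc s t) (hMc.mono hmem)
      intro x hx
      rw [interior_Icc] at hx
      have hx' : x ∈ Set.Icc 0 T := hmem ⟨hx.1.le, hx.2.le⟩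
      rw [(hODE x hx').deriv]
      have hMx : L₂ < M x := hgt x ⟨hx.1.le, hx.2⟩
      have hφx : φ x ≤ L₂ := hle₂ x hx'
      have h1 : q₁ x < q₂ x * M x := by
        have h2 : q₁ x / q₂ x < M x := lt_of_le_of_lt hφx hMx
        have := (div_lt_iff₀ (hq₂pos x hx')).mp h2
        linarith [mul_comm (M x) (q₂ x)]
      nlinarith
    have hlt := hmono (Set.left_mem_Icc.mpr hst.le) (Set.right_mem_Icc.mpr hst.le) hst
    have hMt : M t ≤ L₂ := htS.2
    linarith
  -- lower bound
  have hlower : ∀ s ∈ Set.Icc 0 T, L₁ ≤ M s := by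
    intro s hs
    by_contra hcon
    push_neg at hcon
    have hsub : Set.Icc s T ⊆ Set.Icc 0 T := Set.Icc_subset_Icc hs.1 le_rfl
    set S := Set.Icc s T ∩ M ⁻¹' Set.Ici L₁ with hS
    have hSclosed : IsClosed S :=
      (hMc.mono hsub).preimage_isClosed_of_isClosed isClosed_Icc isClosed_Ici
    have hTS : T ∈ S := ⟨⟨hs.2, le_rfl⟩, by simp [Set.mem_preimage, hterm, hL₁g]⟩
    have hSbdd : BddBelow S := ⟨s, fun x hx => hx.1.1⟩
    have htS : sInf S ∈ S := hSclosed.csInf_mem ⟨T, hTS⟩ hSbdd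
    set t := sInf S with ht
    have hst : s < t := by
      rcases lt_or_eq_of_le htS.1.1 with h | h
      · exact h
      · exfalso; have : L₁ ≤ M t := htS.2; rw [← h] at this; linarith
    have hmem : Set.Icc s t ⊆ Set.Icc 0 T := Set.Icc_subset_Icc hs.1 htS.1.2
    have hgt : ∀ x ∈ Set.Ico s t, M x < L₁ := by
      intro x hx
      by_contra hle
      push_neg at hle
      exact absurd (csInf_le hSbdd ⟨⟨hx.1, le_trans hx.2.le htS.1.2⟩, hle⟩)
        (not_le.mpr hx.2)
    have hanti : StrictAntiOn M (Set.Icc s t) := by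
      apply strictAntiOn_of_deriv_neg (convex_Icc s t) (hMc.mono hmem)
      intro x hx
      rw [interior_Icc] at hx
      have hx' : x ∈ Set.Icc 0 T := hmem ⟨hx.1.le, hx.2.le⟩
      rw [(hODE x hx').deriv]
      have hMx : M x < L₁ := hgt x ⟨hx.1.le, hx.2⟩
      have hφx : L₁ ≤ φ x := hle₁ x hx'
      have h1 : q₂ x * M x < q₁ x := by
        have h2 : M x < q₁ x / q₂ x := lt_of_lt_of_le hMx hφx
        have := (lt_div_iff₀ (hq₂pos x hx')).mp h2
        linarith [mul_comm (M x) (q₂ x)]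
      have h2 : 0 < M x := hMpos x hx'
      nlinarith
    have hlt := hanti (Set.left_mem_Icc.mpr hst.le) (Set.right_mem_Icc.mpr hst.le) hst
    have hMt : L₁ ≤ M t := htS.2
    linarith
  exact fun s hs => ⟨hlower s hs, hupper s hs⟩
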